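/- Let $n \ge 1$, $k \ge 1$ be integers and $\Delta \in (0, 1]$. For deletion-only attacks (so $n' = n - r$, $m = n - r$), the constraint $((n-r)/n)^k - 2\cdot((n-r)/n)^k + 1 - \Delta < 0$ holds for a nonnegative integer $r < n$ if and only if $r < n \cdot (1 - \sqrt[k]{1 - \Delta})$. Consequently the maximal such integer is $r^* = \lceil n(1 - \sqrt[k]{1-\Delta}) \rceil - 1$. -/

import Mathlib

/-- Corollary 2 (deletion-only attacks): with `n' = m = n - r`, the certification
constraint holds for `0 ≤ r < n` iff `r < n(1 - (1 - Δ)^(1/k))`, and the maximal such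
integer is `⌈n(1 - (1 - Δ)^(1/k))⌉ - 1`. -/
theorem certified_size_deletion (n k : ℕ) (hn : 1 ≤ n) (hk : 1 ≤ k)
    (Δ : ℝ) (hΔpos : 0 < Δ) (hΔle : Δ ≤ 1) :
    (∀ r : ℕ, r < n →
      ((((n - r : ℕ) : ℝ) / n) ^ k - 2 * (((n - r : ℕ) : ℝ) / n) ^ k + 1 - Δ < 0 ↔
        (r : ℝ) < n * (1 - (1 - Δ) ^ ((1 : ℝ) / k)))) ∧
    IsGreatest
      {r : ℕ | r < n ∧
        (((n - r : ℕ) : ℝ) / n) ^ k - 2 * (((n - r : ℕ) : ℝ) / n) ^ k + 1 - Δ < 0}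
      (⌈(n : ℝ) * (1 - (1 - Δ) ^ ((1 : ℝ) / k))⌉ - 1).toNat := by
  have hk0 : k ≠ 0 := by omega
  have hnpos : (0:ℝ) < n := by exact_mod_cast hn
  set c : ℝ := (1 - Δ) ^ ((1:ℝ)/k) with hc
  have h1Δ : (0:ℝ) ≤ 1 - Δ := by linarith
  have hc0 : 0 ≤ c := Real.rpow_nonneg h1Δ _
  have hc1 : c < 1 := by
    apply Real.rpow_lt_one h1Δ (by linarith)
    positivity
  have hck : c ^ k = 1 - Δ := by
    rw [hc, one_div, Real.rpow_inv_natCast_pow h1Δ hk0]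
  have key : ∀ r : ℕ, r < n →
      ((((n - r : ℕ) : ℝ) / n) ^ k - 2 * (((n - r : ℕ) : ℝ) / n) ^ k + 1 - Δ < 0 ↔
        (r : ℝ) < n * (1 - c)) := by
    intro r hr
    have hcast : ((n - r : ℕ) : ℝ) = (n:ℝ) - r := by
      have := @Nat.cast_sub ℝ _ _ _ hr.le
      simpa using this
    set x : ℝ := ((n - r : ℕ) : ℝ) / n with hx
    have hx0 : 0 ≤ x := by positivity
    have h1 : x ^ k - 2 * x ^ k + 1 - Δ < 0 ↔ 1 - Δ < x ^ k := by
      constructor <;> intro h <;> linarith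
    rw [h1, ← hck, pow_lt_pow_iff_left₀ hc0 hx0 hk0, hx, hcast,
      lt_div_iff₀ hnpos]
    constructor <;> intro h <;> nlinarith
  refine ⟨key, ?_, ?_⟩
  · -- membership
    have hMpos : 0 < (n:ℝ) * (1 - c) := by
      apply mul_pos hnpos; linarith
    have hceil1 : 1 ≤ ⌈(n : ℝ) * (1 - c)⌉ := Int.ceil_pos.mpr hMpos
    have htz : ((⌈(n : ℝ) * (1 - c)⌉ - 1).toNat : ℤ) = ⌈(n : ℝ) * (1 - c)⌉ - 1 :=
      Int.toNat_of_nonneg (by omega)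
    have hlt : (((⌈(n : ℝ) * (1 - c)⌉ - 1).toNat : ℤ) : ℝ) < (n:ℝ) * (1 - c) := by
      rw [htz]
      push_cast
      have := Int.ceil_lt_add_one ((n : ℝ) * (1 - c))
      linarith
    have hltR : (((⌈(n : ℝ) * (1 - c)⌉ - 1).toNat : ℕ) : ℝ) < (n:ℝ) * (1 - c) := by
      exact_mod_cast hlt
    have hMn : (n:ℝ) * (1 - c) ≤ n := by nlinarith
    have hceiln : ⌈(n : ℝ) * (1 - c)⌉ ≤ (n:ℤ) := Int.ceil_le.mpr (by exact_mod_cast hMn)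
    have htn : (⌈(n : ℝ) * (1 - c)⌉ - 1).toNat < n := by omega
    exact ⟨htn, (key _ htn).mpr hltR⟩
  · intro r hr
    have hrM : (r:ℝ) < (n:ℝ) * (1 - c) := (key r hr.1).mp hr.2
    have : (r:ℤ) < ⌈(n : ℝ) * (1 - c)⌉ := Int.lt_ceil.mpr (by exact_mod_cast hrM)
    omega
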